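/- Let ψ₂^ℓ be as in the convex lower kernel and α_d = √(2(d+3)/(d+1)). Then for every function s: {‖x‖≤1} → ℝ with s(0) ≥ 0 such that x ↦ s(x/α_d) (supported on {‖y‖ ≤ α_d}) is differentiable with Σᵢ|∂ᵢ of it at y − ∂ᵢ at z| ≤ ‖y−z‖ for all y,z, one has ⟨s, ψ₂^ℓ⟩ ≥ ‖ψ₂^ℓ‖² − ⟨1, ψ₂^ℓ⟩, where ⟨f,g⟩ = ∫ f·g over the unit ball and ‖ψ₂^ℓ‖² = ⟨ψ₂^ℓ,ψ₂^ℓ⟩. -/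

import Mathlib

open MeasureTheory Metric Set intervalIntegral
open scoped NNReal ENNReal

/-- The convex lower kernel `ψ₂ℓ(x) = 1 - ((2d+4)/(d+1))‖x‖ + ((d+3)/(d+1))‖x‖²`
(used on the unit ball). -/
noncomputable def psiTwoL (d : ℕ) (x : EuclideanSpace ℝ (Fin d)) : ℝ :=
  1 - ((2 * (d : ℝ) + 4) / ((d : ℝ) + 1)) * ‖x‖ + (((d : ℝ) + 3) / ((d : ℝ) + 1)) * ‖x‖ ^ 2

/-- `α_d = √(2(d+3)/(d+1))`. -/
noncomputable def alphaD (d : ℕ) : ℝ := Real.sqrt (2 * ((d : ℝ) + 3) / ((d : ℝ) + 1))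

noncomputable section

namespace CLKAux

/-- radial profile of the kernel -/
def psiR (d : ℕ) (t : ℝ) : ℝ :=
  1 - ((2 * (d : ℝ) + 4) / ((d : ℝ) + 1)) * t + (((d : ℝ) + 3) / ((d : ℝ) + 1)) * t ^ 2

def Aa (d : ℕ) : ℝ := (2 * (d : ℝ) + 4) / ((d : ℝ) + 1)
def Bb (d : ℕ) : ℝ := ((d : ℝ) + 3) / ((d : ℝ) + 1)

lemma psiR_eq (d : ℕ) (t : ℝ) : psiR d t = 1 - Aa d * t + Bb d * t ^ 2 := rfl

lemma d1_ne (d : ℕ) : ((d : ℝ) + 1) ≠ 0 := by positivity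

lemma psiR_factor (d : ℕ) (t : ℝ) : psiR d t = (1 - t) * (1 - Bb d * t) := by
  rw [psiR_eq, Aa, Bb]
  field_simp
  ring

def w (d : ℕ) (t : ℝ) : ℝ := t ^ (d - 1) * psiR d t

def Psi (d : ℕ) (t : ℝ) : ℝ :=
  (1 / (d : ℝ) - Aa d / ((d : ℝ) + 1) + Bb d / ((d : ℝ) + 2))
  - (t ^ d / (d : ℝ) - Aa d * t ^ (d + 1) / ((d : ℝ) + 1) + Bb d * t ^ (d + 2) / ((d : ℝ) + 2))

lemma continuous_psiR (d : ℕ) : Continuous (psiR d) := by unfold psiR; fun_prop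

lemma continuous_w (d : ℕ) : Continuous (w d) :=
  (continuous_pow _).mul (continuous_psiR d)

lemma continuous_Psi (d : ℕ) : Continuous (Psi d) := by unfold Psi; fun_prop

lemma hasDerivAt_Psi (m : ℕ) (t : ℝ) : HasDerivAt (Psi (m + 1)) (-(w (m + 1) t)) t := by
  have h1 : HasDerivAt (fun t : ℝ => t ^ (m + 1)) (((m : ℝ) + 1) * t ^ m) t := by
    simpa using hasDerivAt_pow (m + 1) t
  have h2 : HasDerivAt (fun t : ℝ => t ^ (m + 2)) (((m : ℝ) + 2) * t ^ (m + 1)) t := by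
    have := hasDerivAt_pow (m + 2) t
    push_cast at this
    simpa using this
  have h3 : HasDerivAt (fun t : ℝ => t ^ (m + 3)) (((m : ℝ) + 3) * t ^ (m + 2)) t := by
    have := hasDerivAt_pow (m + 3) t
    push_cast at this
    simpa using this
  have H := (((h1.div_const ((m:ℝ)+1)).sub
      ((h2.const_mul (Aa (m+1))).div_const (((m:ℝ)+1)+1))).add
      ((h3.const_mul (Bb (m+1))).div_const (((m:ℝ)+1)+2))).const_sub
      (1 / ((m:ℝ)+1) - Aa (m+1) / (((m:ℝ)+1) + 1) + Bb (m+1) / (((m:ℝ)+1) + 2))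
  have heq : ∀ s : ℝ, (1 / ((m:ℝ)+1) - Aa (m+1) / (((m:ℝ)+1) + 1) + Bb (m+1) / (((m:ℝ)+1) + 2))
      - (s ^ (m+1) / ((m:ℝ)+1) - Aa (m+1) * s ^ (m + 2) / (((m:ℝ)+1)+1)
        + Bb (m+1) * s ^ (m + 3) / (((m:ℝ)+1)+2)) = Psi (m + 1) s := by
    intro s
    rw [Psi]
    push_cast
    ring_nf
  have H' : HasDerivAt (Psi (m + 1))
      (-(((m:ℝ)+1) * t ^ m / ((m:ℝ)+1) - Aa (m+1) * (((m:ℝ)+2) * t ^ (m+1)) / (((m:ℝ)+1)+1)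
        + Bb (m+1) * (((m:ℝ)+3) * t ^ (m+2)) / (((m:ℝ)+1)+2))) t := by
    refine HasDerivAt.congr_deriv (H.congr_of_eventuallyEq ?_) ?_
    · exact Filter.Eventually.of_forall fun s => (heq s).symm
    · ring
  refine H'.congr_deriv ?_
  have hm1 : ((m : ℝ) + 1) ≠ 0 := d1_ne m
  rw [w, psiR_eq]
  simp only [Nat.add_sub_cancel]
  rw [Aa, Bb]
  push_cast
  field_simp
  ring

lemma Psi_one (d : ℕ) : Psi d 1 = 0 := by simp [Psi]

lemma Psi_zero_eq (m : ℕ) :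
    Psi (m + 1) 0 = 2 / (((m : ℝ) + 1) * ((m : ℝ) + 2) ^ 2 * ((m : ℝ) + 3)) := by
  rw [Psi, Aa, Bb]
  push_cast
  rw [zero_pow (by omega), zero_pow (by omega), zero_pow (by omega)]
  field_simp
  ring

lemma Psi_zero_nonneg (m : ℕ) : 0 ≤ Psi (m + 1) 0 := by
  rw [Psi_zero_eq]; positivity

lemma integral_w (m : ℕ) : ∫ t in (0:ℝ)..1, w (m + 1) t = Psi (m + 1) 0 := by
  have h : ∫ t in (0:ℝ)..1, -(w (m + 1) t) = Psi (m + 1) 1 - Psi (m + 1) 0 :=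
    intervalIntegral.integral_eq_sub_of_hasDerivAt
      (fun t _ => hasDerivAt_Psi m t)
      ((continuous_w (m+1)).neg.intervalIntegrable 0 1)
  rw [intervalIntegral.integral_neg, Psi_one] at h
  linarith

lemma integral_Psi (m : ℕ) : ∫ t in (0:ℝ)..1, Psi (m + 1) t = 0 := by
  have h1 : ∀ t : ℝ, HasDerivAt (fun t : ℝ => t ^ (m + 2)) (((m : ℝ) + 2) * t ^ (m + 1)) t := by
    intro t; have := hasDerivAt_pow (m + 2) t; push_cast at this; simpa using this
  have h2 : ∀ t : ℝ, HasDerivAt (fun t : ℝ => t ^ (m + 3)) (((m : ℝ) + 3) * t ^ (m + 2)) t := by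
    intro t; have := hasDerivAt_pow (m + 3) t; push_cast at this; simpa using this
  have h3 : ∀ t : ℝ, HasDerivAt (fun t : ℝ => t ^ (m + 4)) (((m : ℝ) + 4) * t ^ (m + 3)) t := by
    intro t; have := hasDerivAt_pow (m + 4) t; push_cast at this; simpa using this
  have hm1 : ((m : ℝ) + 1) ≠ 0 := by positivity
  have hm2 : ((m : ℝ) + 2) ≠ 0 := by positivity
  have hm3 : ((m : ℝ) + 3) ≠ 0 := by positivity
  have hm4 : ((m : ℝ) + 4) ≠ 0 := by positivity
  set C : ℝ := 1 / ((m:ℝ)+1) - Aa (m+1) / ((m:ℝ)+2) + Bb (m+1) / ((m:ℝ)+3) with hC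
  set Q : ℝ → ℝ := fun t => C * t
    - (t ^ (m+2) / (((m:ℝ)+1) * ((m:ℝ)+2)) - Aa (m+1) * t ^ (m+3) / (((m:ℝ)+2) * ((m:ℝ)+3))
      + Bb (m+1) * t ^ (m+4) / (((m:ℝ)+3) * ((m:ℝ)+4))) with hQ
  have hder : ∀ t : ℝ, HasDerivAt Q (Psi (m + 1) t) t := by
    intro t
    have H := ((hasDerivAt_id t).const_mul C).sub
        ((((h1 t).div_const (((m:ℝ)+1) * ((m:ℝ)+2))).sub
          (((h2 t).const_mul (Aa (m+1))).div_const (((m:ℝ)+2) * ((m:ℝ)+3)))).add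
          (((h3 t).const_mul (Bb (m+1))).div_const (((m:ℝ)+3) * ((m:ℝ)+4))))
    refine H.congr_deriv ?_
    rw [Psi, hC, Aa, Bb]
    push_cast
    field_simp
    ring
  have h : ∫ t in (0:ℝ)..1, Psi (m + 1) t = Q 1 - Q 0 :=
    intervalIntegral.integral_eq_sub_of_hasDerivAt (fun t _ => hder t)
      ((continuous_Psi (m + 1)).intervalIntegrable 0 1)
  rw [h, hQ, hC, Aa, Bb]
  push_cast
  field_simp
  ring


lemma Bb_pos (d : ℕ) : 0 < Bb d := by rw [Bb]; positivity

def r0 (d : ℕ) : ℝ := ((d : ℝ) + 1) / ((d : ℝ) + 3)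

lemma r0_mem (d : ℕ) : r0 d ∈ Ioo (0:ℝ) 1 := by
  constructor
  · rw [r0]; positivity
  · rw [r0, div_lt_one (by positivity)]; linarith

lemma r0_Bb (d : ℕ) : Bb d * r0 d = 1 := by
  rw [Bb, r0]
  field_simp

lemma psiR_nonneg (d : ℕ) {t : ℝ} (h1 : t ≤ r0 d) (h2 : t ≤ 1) : 0 ≤ psiR d t := by
  rw [psiR_factor]
  have : Bb d * t ≤ 1 := by
    rw [← r0_Bb d]
    exact mul_le_mul_of_nonneg_left h1 (Bb_pos d).le
  nlinarith

lemma psiR_nonpos (d : ℕ) {t : ℝ} (h1 : r0 d ≤ t) (h2 : t ≤ 1) : psiR d t ≤ 0 := by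
  rw [psiR_factor]
  have : 1 ≤ Bb d * t := by
    rw [← r0_Bb d]
    exact mul_le_mul_of_nonneg_left h1 (Bb_pos d).le
  nlinarith

lemma sign_structure (m : ℕ) : ∃ τ ∈ Icc (0:ℝ) 1,
    (∀ t, 0 ≤ t → t < τ → 0 ≤ Psi (m + 1) t) ∧
    (∀ t, τ < t → t ≤ 1 → Psi (m + 1) t ≤ 0) := by
  set d := m + 1 with hd
  have hdiffPsi : Differentiable ℝ (Psi d) := fun t => (hasDerivAt_Psi m t).differentiableAt
  have hderiv : ∀ t, deriv (Psi d) t = -(w d t) := fun t => (hasDerivAt_Psi m t).deriv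
  have hr0 := r0_mem d
  -- antitone on [0, r0]
  have hant : AntitoneOn (Psi d) (Icc 0 (r0 d)) := by
    apply antitoneOn_of_deriv_nonpos (convex_Icc _ _) (continuous_Psi d).continuousOn
      (hdiffPsi.differentiableOn)
    intro x hx
    rw [interior_Icc] at hx
    rw [hderiv, neg_nonpos, w]
    exact mul_nonneg (pow_nonneg hx.1.le _)
      (psiR_nonneg d hx.2.le (hx.2.trans hr0.2).le)
  -- monotone on [r0, 1]
  have hmono : MonotoneOn (Psi d) (Icc (r0 d) 1) := by
    apply monotoneOn_of_deriv_nonneg (convex_Icc _ _) (continuous_Psi d).continuousOn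
      (hdiffPsi.differentiableOn)
    intro x hx
    rw [interior_Icc] at hx
    rw [hderiv, neg_nonneg, w]
    exact mul_nonpos_of_nonneg_of_nonpos (pow_nonneg (hr0.1.trans hx.1).le _)
      (psiR_nonpos d hx.1.le hx.2.le)
  have h1mem : (1:ℝ) ∈ Icc (r0 d) 1 := right_mem_Icc.mpr hr0.2.le
  have hnonpos_tail : ∀ t ∈ Icc (r0 d) 1, Psi d t ≤ 0 := by
    intro t ht
    have := hmono ht h1mem ht.2
    rwa [Psi_one] at this
  set S : Set ℝ := insert 0 {t : ℝ | t ∈ Icc 0 (r0 d) ∧ 0 ≤ Psi d t} with hS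
  have hSne : S.Nonempty := ⟨0, mem_insert _ _⟩
  have hSsub : S ⊆ Icc 0 (r0 d) := by
    intro x hx
    rcases hx with rfl | hx
    · exact left_mem_Icc.mpr hr0.1.le
    · exact hx.1
  have hSbdd : BddAbove S := (bddAbove_Icc).mono hSsub
  set τ := sSup S with hτ
  have hτ0 : 0 ≤ τ := le_csSup hSbdd (mem_insert _ _)
  have hτr0 : τ ≤ r0 d := csSup_le hSne fun x hx => (hSsub hx).2
  refine ⟨τ, ⟨hτ0, hτr0.trans hr0.2.le⟩, ?_, ?_⟩
  · intro t ht0 htτ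
    obtain ⟨y, hy, hty⟩ := exists_lt_of_lt_csSup hSne htτ
    rcases hy with rfl | hy
    · linarith
    · exact le_trans hy.2 (hant ⟨ht0, hty.le.trans hy.1.2⟩ hy.1 hty.le)
  · intro t hτt ht1
    by_cases hcase : t ≤ r0 d
    · have hnot : t ∉ S := fun hmem => absurd (le_csSup hSbdd hmem) (not_le.mpr hτt)
      have ht0 : 0 ≤ t := hτ0.trans hτt.le
      by_contra hcon
      push_neg at hcon
      exact hnot (mem_insert_iff.mpr (Or.inr ⟨⟨ht0, hcase⟩, hcon.le⟩))
    · exact hnonpos_tail t ⟨(not_le.mp hcase).le, ht1⟩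

lemma core_ineq (m : ℕ) (φ : ℝ → ℝ) (hφ : Monotone φ) :
    ∫ t in (0:ℝ)..1, φ t * Psi (m + 1) t ≤ 0 := by
  obtain ⟨τ, hτ, hpos, hneg⟩ := sign_structure m
  have hφint : IntervalIntegrable φ volume 0 1 := hφ.intervalIntegrable
  have hint1 : IntervalIntegrable (fun t => φ t * Psi (m + 1) t) volume 0 1 :=
    hφint.mul_continuousOn (continuous_Psi (m + 1)).continuousOn
  have hint2 : IntervalIntegrable (fun t => φ τ * Psi (m + 1) t) volume 0 1 :=
    (continuous_const.mul (continuous_Psi (m + 1))).intervalIntegrable 0 1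
  have hptw : ∀ t ∈ Icc (0:ℝ) 1, 0 ≤ φ τ * Psi (m + 1) t - φ t * Psi (m + 1) t := by
    intro t ht
    have : φ τ * Psi (m+1) t - φ t * Psi (m+1) t = (φ τ - φ t) * Psi (m+1) t := by ring
    rw [this]
    rcases lt_trichotomy t τ with hlt | rfl | hgt
    · exact mul_nonneg (sub_nonneg.mpr (hφ hlt.le)) (hpos t ht.1 hlt)
    · simp
    · have h1 : φ τ - φ t ≤ 0 := sub_nonpos.mpr (hφ hgt.le)
      have h2 : Psi (m+1) t ≤ 0 := hneg t hgt ht.2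
      nlinarith
  have hkey : 0 ≤ ∫ t in (0:ℝ)..1, (φ τ * Psi (m+1) t - φ t * Psi (m+1) t) :=
    intervalIntegral.integral_nonneg zero_le_one hptw
  rw [intervalIntegral.integral_sub hint2 hint1, intervalIntegral.integral_const_mul,
    integral_Psi, mul_zero, zero_sub] at hkey
  linarith

lemma parts_ineq (m : ℕ) (e φ : ℝ → ℝ) (he : ∀ t, HasDerivAt e (φ t) t)
    (he0 : e 0 = 0) (hφ : Monotone φ) :
    ∫ t in (0:ℝ)..1, e t * w (m + 1) t ≤ 0 := by
  have hecont : Continuous e :=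
    (Differentiable.continuous fun t => (he t).differentiableAt)
  have hparts := intervalIntegral.integral_mul_deriv_eq_deriv_mul_of_hasDerivAt
    (u := e) (v := Psi (m + 1)) (u' := φ) (v' := fun t => -(w (m + 1) t))
    hecont.continuousOn (continuous_Psi (m + 1)).continuousOn
    (fun x _ => he x) (fun x _ => hasDerivAt_Psi m x)
    hφ.intervalIntegrable
    ((continuous_w (m + 1)).neg.intervalIntegrable 0 1)
  have hrw : (∫ t in (0:ℝ)..1, e t * -(w (m + 1) t)) = -∫ t in (0:ℝ)..1, e t * w (m + 1) t := by
    rw [← intervalIntegral.integral_neg]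
    congr 1
    funext t
    ring
  rw [hrw, Psi_one, he0, mul_zero, zero_mul] at hparts
  have hcore := core_ineq m φ hφ
  linarith

lemma integral_tw (m : ℕ) : ∫ t in (0:ℝ)..1, t * w (m + 1) t = 0 := by
  have h1 : ∀ t : ℝ, HasDerivAt (fun t : ℝ => t ^ (m + 2)) (((m : ℝ) + 2) * t ^ (m + 1)) t := by
    intro t; have := hasDerivAt_pow (m + 2) t; push_cast at this; simpa using this
  have h2 : ∀ t : ℝ, HasDerivAt (fun t : ℝ => t ^ (m + 3)) (((m : ℝ) + 3) * t ^ (m + 2)) t := by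
    intro t; have := hasDerivAt_pow (m + 3) t; push_cast at this; simpa using this
  have h3 : ∀ t : ℝ, HasDerivAt (fun t : ℝ => t ^ (m + 4)) (((m : ℝ) + 4) * t ^ (m + 3)) t := by
    intro t; have := hasDerivAt_pow (m + 4) t; push_cast at this; simpa using this
  have hm2 : ((m : ℝ) + 2) ≠ 0 := by positivity
  have hm3 : ((m : ℝ) + 3) ≠ 0 := by positivity
  have hm4 : ((m : ℝ) + 4) ≠ 0 := by positivity
  set R : ℝ → ℝ := fun t => t ^ (m+2) / ((m:ℝ)+2) - Aa (m+1) * t ^ (m+3) / ((m:ℝ)+3)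
    + Bb (m+1) * t ^ (m+4) / ((m:ℝ)+4) with hR
  have hder : ∀ t : ℝ, HasDerivAt R (t * w (m + 1) t) t := by
    intro t
    have H := (((h1 t).div_const ((m:ℝ)+2)).sub
        (((h2 t).const_mul (Aa (m+1))).div_const ((m:ℝ)+3))).add
        (((h3 t).const_mul (Bb (m+1))).div_const ((m:ℝ)+4))
    refine H.congr_deriv ?_
    rw [w, psiR_eq, Aa, Bb]
    simp only [Nat.add_sub_cancel]
    push_cast
    field_simp
    ring
  have h : ∫ t in (0:ℝ)..1, t * w (m + 1) t = R 1 - R 0 :=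
    intervalIntegral.integral_eq_sub_of_hasDerivAt (fun t _ => hder t)
      ((continuous_id.mul (continuous_w (m + 1))).intervalIntegrable 0 1)
  rw [h, hR, Aa, Bb]
  push_cast
  field_simp
  ring

lemma abs_coord_le_norm {d : ℕ} (v : EuclideanSpace ℝ (Fin d)) (i : Fin d) : |v i| ≤ ‖v‖ := by
  have h := norm_inner_le_norm (𝕜 := ℝ) (EuclideanSpace.single i (1:ℝ)) v
  rw [EuclideanSpace.inner_single_left, EuclideanSpace.norm_single] at h
  simpa using h

lemma op_bound {d : ℕ} (g : EuclideanSpace ℝ (Fin d) → ℝ) (hg : Differentiable ℝ g)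
    (hlip : ∀ y z : EuclideanSpace ℝ (Fin d),
      ∑ i, |fderiv ℝ g y (EuclideanSpace.single i 1) -
            fderiv ℝ g z (EuclideanSpace.single i 1)| ≤ ‖y - z‖)
    (y z v : EuclideanSpace ℝ (Fin d)) :
    |fderiv ℝ g y v - fderiv ℝ g z v| ≤ ‖y - z‖ * ‖v‖ := by
  have hv : v = ∑ i, v i • EuclideanSpace.single i (1:ℝ) := by
    have := (EuclideanSpace.basisFun (Fin d) ℝ).sum_repr v
    simp only [EuclideanSpace.basisFun_repr, EuclideanSpace.basisFun_apply] at this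
    exact this.symm
  have hexp : fderiv ℝ g y v - fderiv ℝ g z v =
      ∑ i, v i * (fderiv ℝ g y (EuclideanSpace.single i 1)
        - fderiv ℝ g z (EuclideanSpace.single i 1)) := by
    conv_lhs => rw [hv]
    rw [map_sum, map_sum, ← Finset.sum_sub_distrib]
    congr 1
    funext i
    rw [ContinuousLinearMap.map_smul, ContinuousLinearMap.map_smul]
    simp only [smul_eq_mul]
    ring
  rw [hexp]
  calc |∑ i, v i * (fderiv ℝ g y (EuclideanSpace.single i 1)
        - fderiv ℝ g z (EuclideanSpace.single i 1))|
      ≤ ∑ i, |v i * (fderiv ℝ g y (EuclideanSpace.single i 1)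
        - fderiv ℝ g z (EuclideanSpace.single i 1))| := Finset.abs_sum_le_sum_abs _ _
    _ ≤ ∑ i, ‖v‖ * |fderiv ℝ g y (EuclideanSpace.single i 1)
        - fderiv ℝ g z (EuclideanSpace.single i 1)| := by
        refine Finset.sum_le_sum fun i _ => ?_
        rw [abs_mul]
        exact mul_le_mul_of_nonneg_right (abs_coord_le_norm v i) (abs_nonneg _)
    _ = ‖v‖ * ∑ i, |fderiv ℝ g y (EuclideanSpace.single i 1)
        - fderiv ℝ g z (EuclideanSpace.single i 1)| := by rw [Finset.mul_sum]
    _ ≤ ‖v‖ * ‖y - z‖ := mul_le_mul_of_nonneg_left (hlip y z) (norm_nonneg _)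
    _ = ‖y - z‖ * ‖v‖ := mul_comm _ _

lemma per_direction (m : ℕ) (g : EuclideanSpace ℝ (Fin (m+1)) → ℝ)
    (hg : Differentiable ℝ g)
    (hlip : ∀ y z : EuclideanSpace ℝ (Fin (m+1)),
      ∑ i, |fderiv ℝ g y (EuclideanSpace.single i 1) -
            fderiv ℝ g z (EuclideanSpace.single i 1)| ≤ ‖y - z‖)
    (hg0 : 0 ≤ g 0)
    (v : EuclideanSpace ℝ (Fin (m+1))) (hv : ‖v‖ ^ 2 = 2 * Bb (m+1)) :
    2 * (Bb (m+1) * ∫ t in (0:ℝ)..1, t ^ 2 * w (m+1) t) ≤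
      ∫ t in (0:ℝ)..1, (g (t • v) + g (t • (-v))) * w (m+1) t := by
  set e : ℝ → ℝ := fun t => g 0 + Bb (m+1) * t ^ 2 - (g (t • v) + g (t • (-v))) / 2 with he_def
  set φ : ℝ → ℝ := fun t => 2 * Bb (m+1) * t
    - ((fderiv ℝ g (t • v)) v + (fderiv ℝ g (t • (-v))) (-v)) / 2 with hφ_def
  have hpath : ∀ (t : ℝ) (u : EuclideanSpace ℝ (Fin (m+1))),
      HasDerivAt (fun t : ℝ => g (t • u)) ((fderiv ℝ g (t • u)) u) t := by
    intro t u
    have h1 : HasDerivAt (fun t : ℝ => t • u) ((1:ℝ) • u) t := (hasDerivAt_id t).smul_const u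
    have := ((hg (t • u)).hasFDerivAt).comp_hasDerivAt t h1
    rw [one_smul] at this
    exact this
  have he : ∀ t, HasDerivAt e (φ t) t := by
    intro t
    have h2 : HasDerivAt (fun t : ℝ => g 0 + Bb (m+1) * t ^ 2) (Bb (m+1) * (2 * t)) t := by
      have := ((hasDerivAt_pow 2 t).const_mul (Bb (m+1))).const_add (g 0)
      simpa using this
    have H := h2.sub ((((hpath t v).add (hpath t (-v)))).div_const 2)
    refine H.congr_deriv ?_
    rw [hφ_def]
    ring
  have he0 : e 0 = 0 := by
    rw [he_def]
    simp
  have hφmono : Monotone φ := by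
    intro t₁ t₂ ht
    have hb1 : |fderiv ℝ g (t₂ • v) v - fderiv ℝ g (t₁ • v) v| ≤ (t₂ - t₁) * (2 * Bb (m+1)) := by
      have := op_bound g hg hlip (t₂ • v) (t₁ • v) v
      have hnorm : ‖t₂ • v - t₁ • v‖ * ‖v‖ = (t₂ - t₁) * (2 * Bb (m+1)) := by
        rw [← sub_smul, norm_smul, Real.norm_eq_abs, abs_of_nonneg (by linarith),
          mul_assoc, ← sq, hv]
      rwa [hnorm] at this
    have hb2 : |fderiv ℝ g (t₂ • (-v)) (-v) - fderiv ℝ g (t₁ • (-v)) (-v)|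
        ≤ (t₂ - t₁) * (2 * Bb (m+1)) := by
      have := op_bound g hg hlip (t₂ • (-v)) (t₁ • (-v)) (-v)
      have hnorm : ‖t₂ • (-v) - t₁ • (-v)‖ * ‖(-v)‖ = (t₂ - t₁) * (2 * Bb (m+1)) := by
        rw [← sub_smul, norm_smul, norm_neg, Real.norm_eq_abs, abs_of_nonneg (by linarith),
          mul_assoc, ← sq, hv]
      rwa [hnorm] at this
    rw [hφ_def]
    simp only
    rw [abs_le] at hb1 hb2
    linarith [hb1.1, hb1.2, hb2.1, hb2.2]
  have hmain := parts_ineq m e φ he he0 hφmono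
  -- expand e * w
  have hgc : Continuous g := hg.continuous
  have hc1 : Continuous (fun t : ℝ => g (t • v)) := by fun_prop
  have hc2 : Continuous (fun t : ℝ => g (t • (-v))) := by fun_prop
  have hsplit : (∫ t in (0:ℝ)..1, e t * w (m+1) t)
      = g 0 * (∫ t in (0:ℝ)..1, w (m+1) t) + Bb (m+1) * (∫ t in (0:ℝ)..1, t ^ 2 * w (m+1) t)
        - (∫ t in (0:ℝ)..1, (g (t • v) + g (t • (-v))) * w (m+1) t) / 2 := by
    rw [← intervalIntegral.integral_const_mul, ← intervalIntegral.integral_const_mul,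
      ← intervalIntegral.integral_div, ← intervalIntegral.integral_add, ← intervalIntegral.integral_sub]
    · congr 1
      funext t
      rw [he_def]
      ring
    · exact ((continuous_const.mul (continuous_w (m+1))).add
        (continuous_const.mul ((continuous_pow 2).mul (continuous_w (m+1))))).intervalIntegrable 0 1
    · exact (((hc1.add hc2).mul (continuous_w (m+1))).div_const 2).intervalIntegrable 0 1
    · exact (continuous_const.mul (continuous_w (m+1))).intervalIntegrable 0 1
    · exact (continuous_const.mul ((continuous_pow 2).mul (continuous_w (m+1)))).intervalIntegrable 0 1
  rw [hsplit] at hmain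
  rw [integral_w] at hmain
  have hPsi0 := Psi_zero_nonneg m
  nlinarith [mul_nonneg hg0 hPsi0]


variable {d : ℕ}

local notation "E" => EuclideanSpace ℝ (Fin d)

theorem polar (hd : 1 ≤ d) (F : EuclideanSpace ℝ (Fin d) → ℝ) (hF : Continuous F) :
    ((∫ x in closedBall (0 : EuclideanSpace ℝ (Fin d)) 1, F x) =
      ∫ u : sphere (0 : EuclideanSpace ℝ (Fin d)) 1,
        (∫ t in Ioc (0:ℝ) 1, t ^ (d - 1) * F (t • (u : EuclideanSpace ℝ (Fin d))))
        ∂(volume : Measure (EuclideanSpace ℝ (Fin d))).toSphere)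
    ∧ Integrable (fun u : sphere (0 : EuclideanSpace ℝ (Fin d)) 1 =>
        ∫ t in Ioc (0:ℝ) 1, t ^ (d - 1) * F (t • (u : EuclideanSpace ℝ (Fin d))))
        (volume : Measure (EuclideanSpace ℝ (Fin d))).toSphere := by
  have hdim : Module.finrank ℝ E = d := finrank_euclideanSpace_fin
  haveI : Nontrivial E := by
    refine Module.nontrivial_of_finrank_pos (R := ℝ) ?_
    rw [hdim]; omega
  set μ : Measure E := volume with hμ
  set G : E → ℝ := (closedBall (0 : E) 1).indicator F with hG
  have hGi : Integrable G μ := by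
    rw [hG, integrable_indicator_iff measurableSet_closedBall]
    exact hF.continuousOn.integrableOn_compact (isCompact_closedBall _ _)
  set T := homeomorphUnitSphereProd E with hT
  set ν := μ.toSphere.prod (Measure.volumeIoiPow (Module.finrank ℝ E - 1)) with hν
  set f : sphere (0 : E) 1 × Ioi (0:ℝ) → ℝ := fun p => G ((p.2 : ℝ) • (p.1 : E)) with hf
  have hMP := μ.measurePreserving_homeomorphUnitSphereProd
  have hfT : ∀ x : ({0}ᶜ : Set E), f (T x) = G x := by
    intro x
    simp only [hf, hT, homeomorphUnitSphereProd_apply_snd_coe,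
      homeomorphUnitSphereProd_apply_fst_coe]
    rw [smul_inv_smul₀ (norm_ne_zero_iff.2 x.2)]
  have hGc : Integrable (fun x : ({0}ᶜ : Set E) => G x) (μ.comap Subtype.val) := by
    have h1 : Integrable G (μ.restrict ({(0:E)}ᶜ)) := hGi.restrict
    rw [← map_comap_subtype_coe (measurableSet_singleton (0:E)).compl] at h1
    exact (MeasurableEmbedding.subtype_coe
      (measurableSet_singleton (0:E)).compl).integrable_map_iff.mp h1
  have hfi : Integrable f ν := by
    rw [← hMP.integrable_comp_emb T.measurableEmbedding]
    exact hGc.congr (Filter.Eventually.of_forall fun x => (hfT x).symm)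
  -- inner integral computation
  have hinner : ∀ u : sphere (0 : E) 1,
      (∫ r : Ioi (0:ℝ), f (u, r) ∂(Measure.volumeIoiPow (Module.finrank ℝ E - 1)))
        = ∫ t in Ioc (0:ℝ) 1, t ^ (d - 1) * F (t • (u : E)) := by
    intro u
    rw [hdim]
    simp only [Measure.volumeIoiPow, ENNReal.ofReal]
    rw [integral_withDensity_eq_integral_smul
      ((measurable_subtype_coe.pow_const _).real_toNNReal)]
    have hre : (∫ x : ↥(Ioi (0:ℝ)), ((x:ℝ) ^ (d-1)).toNNReal • f (u, x)
          ∂(Measure.comap Subtype.val volume))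
        = ∫ a in Ioi (0:ℝ), (a ^ (d-1)).toNNReal • G (a • (u : E)) :=
      integral_subtype_comap measurableSet_Ioi
        (fun a : ℝ => (a ^ (d-1)).toNNReal • G (a • (u : E)))
    rw [hre]
    have hpt : ∀ a ∈ Ioi (0:ℝ),
        ((a ^ (d-1)).toNNReal : ℝ≥0) • G (a • (u : E))
          = (Ioc (0:ℝ) 1).indicator (fun t => t ^ (d-1) * F (t • (u : E))) a := by
      intro a ha
      have hnorm : ‖a • (u : E)‖ = a := by
        rw [norm_smul, mem_sphere_zero_iff_norm.mp u.2, mul_one,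
          Real.norm_eq_abs, abs_of_pos ha]
      by_cases h1 : a ≤ 1
      · have hmem : a • (u : E) ∈ closedBall (0 : E) 1 := by
          rw [mem_closedBall_zero_iff, hnorm]; exact h1
        rw [indicator_of_mem (mem_Ioc.mpr ⟨mem_Ioi.mp ha, h1⟩), hG, indicator_of_mem hmem,
          NNReal.smul_def, Real.coe_toNNReal _ (pow_nonneg (le_of_lt ha) _),
          smul_eq_mul]
      · have hmem : a • (u : E) ∉ closedBall (0 : E) 1 := by
          rw [mem_closedBall_zero_iff, hnorm]; exact h1
        rw [indicator_of_notMem (fun hc => h1 hc.2), hG, indicator_of_notMem hmem,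
          smul_zero]
    rw [setIntegral_congr_fun measurableSet_Ioi hpt,
      setIntegral_indicator measurableSet_Ioc]
    congr 1
    rw [inter_eq_right.mpr Ioc_subset_Ioi_self]
  constructor
  · calc ∫ x in closedBall (0 : E) 1, F x ∂μ = ∫ x, G x ∂μ := by
          rw [hG, MeasureTheory.integral_indicator measurableSet_closedBall]
      _ = ∫ x : ({0}ᶜ : Set E), G x ∂(μ.comap Subtype.val) := by
          rw [integral_subtype_comap (measurableSet_singleton (0:E)).compl,
            MeasureTheory.restrict_compl_singleton]
      _ = ∫ p, f p ∂ν := by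
          rw [← hMP.integral_comp T.measurableEmbedding f]
          exact integral_congr_ae (Filter.Eventually.of_forall fun x => (hfT x).symm)
      _ = ∫ u : sphere (0 : E) 1, ∫ r : Ioi (0:ℝ), f (u, r)
            ∂(Measure.volumeIoiPow (Module.finrank ℝ E - 1)) ∂μ.toSphere :=
          integral_prod f hfi
      _ = _ := integral_congr_ae (Filter.Eventually.of_forall fun u => hinner u)
  · exact (hfi.integral_prod_left).congr
      (Filter.Eventually.of_forall fun u => hinner u)


lemma psiTwoL_radial {d : ℕ} (x : EuclideanSpace ℝ (Fin d)) :
    psiTwoL d x = psiR d ‖x‖ := rfl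

lemma continuous_psiTwoL (d : ℕ) : Continuous (psiTwoL d) := by
  unfold psiTwoL
  fun_prop

lemma radial_value (m : ℕ) :
    ∫ t in (0:ℝ)..1, t ^ m * (psiR (m+1) t * psiR (m+1) t - psiR (m+1) t)
      = Bb (m+1) * ∫ t in (0:ℝ)..1, t ^ 2 * w (m+1) t := by
  have hfun : (fun t : ℝ => t ^ m * (psiR (m+1) t * psiR (m+1) t - psiR (m+1) t))
      = fun t : ℝ => -Aa (m+1) * (t * w (m+1) t) + Bb (m+1) * (t ^ 2 * w (m+1) t) := by
    funext t
    simp only [w, psiR_eq, Nat.add_sub_cancel]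
    ring
  rw [hfun, intervalIntegral.integral_add, intervalIntegral.integral_const_mul,
    intervalIntegral.integral_const_mul, integral_tw, mul_zero, zero_add]
  · exact (continuous_const.mul (continuous_id.mul (continuous_w (m+1)))).intervalIntegrable 0 1
  · exact (continuous_const.mul ((continuous_pow 2).mul (continuous_w (m+1)))).intervalIntegrable 0 1

end CLKAux

open CLKAux

/-- Key lemma for the convex lower bound: if `s(0) ≥ 0` and the rescaled function
`y ↦ s(y/α_d)` is differentiable with `Σᵢ |∂ᵢ(y) - ∂ᵢ(z)| ≤ ‖y - z‖` (the class `H'₂,₁`),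
then `⟨s, ψ₂ℓ⟩ ≥ ‖ψ₂ℓ‖² - ⟨1, ψ₂ℓ⟩`, the inner products being over the unit ball. -/
theorem convex_lower_kernel_key {d : ℕ} (hd : 1 ≤ d)
    (s : EuclideanSpace ℝ (Fin d) → ℝ) (hs0 : 0 ≤ s 0)
    (hdiff : Differentiable ℝ (fun y : EuclideanSpace ℝ (Fin d) => s ((alphaD d)⁻¹ • y)))
    (hlip : ∀ y z : EuclideanSpace ℝ (Fin d),
      ∑ i, |fderiv ℝ (fun y : EuclideanSpace ℝ (Fin d) => s ((alphaD d)⁻¹ • y)) y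
              (EuclideanSpace.single i 1) -
            fderiv ℝ (fun y : EuclideanSpace ℝ (Fin d) => s ((alphaD d)⁻¹ • y)) z
              (EuclideanSpace.single i 1)| ≤ ‖y - z‖) :
    (∫ x in Metric.closedBall (0 : EuclideanSpace ℝ (Fin d)) 1, psiTwoL d x * psiTwoL d x) -
      (∫ x in Metric.closedBall (0 : EuclideanSpace ℝ (Fin d)) 1, psiTwoL d x) ≤
    ∫ x in Metric.closedBall (0 : EuclideanSpace ℝ (Fin d)) 1, s x * psiTwoL d x := by
  obtain ⟨m, rfl⟩ : ∃ m, d = m + 1 := ⟨d - 1, by omega⟩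
  set α := alphaD (m+1) with hα_def
  have harg : (0:ℝ) < 2 * (((m+1:ℕ) : ℝ) + 3) / (((m+1:ℕ) : ℝ) + 1) := by positivity
  have hαpos : 0 < α := by
    rw [hα_def, alphaD]
    exact Real.sqrt_pos.mpr harg
  have hα2 : α ^ 2 = 2 * Bb (m+1) := by
    rw [hα_def, alphaD, sq, Real.mul_self_sqrt harg.le, Bb]
    ring
  set g : EuclideanSpace ℝ (Fin (m+1)) → ℝ := fun y => s (α⁻¹ • y) with hg_def
  have hsg : ∀ x, s x = g (α • x) := by
    intro x
    rw [hg_def]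
    simp [inv_smul_smul₀ hαpos.ne']
  have hscont : Continuous s := by
    have h1 : Continuous fun x : EuclideanSpace ℝ (Fin (m+1)) => g (α • x) :=
      hdiff.continuous.comp (continuous_const_smul α)
    have h2 : s = fun x => g (α • x) := funext hsg
    rw [h2]; exact h1
  have hg0 : 0 ≤ g 0 := by
    rw [hg_def]
    simpa [smul_zero] using hs0
  have hψcont := continuous_psiTwoL (m+1)
  set B : Set (EuclideanSpace ℝ (Fin (m+1))) := Metric.closedBall 0 1 with hB_def
  have hint_ψψ : IntegrableOn (fun x => psiTwoL (m+1) x * psiTwoL (m+1) x) B volume :=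
    (hψcont.mul hψcont).continuousOn.integrableOn_compact (isCompact_closedBall _ _)
  have hint_ψ : IntegrableOn (fun x => psiTwoL (m+1) x) B volume :=
    hψcont.continuousOn.integrableOn_compact (isCompact_closedBall _ _)
  have hint_sψ : IntegrableOn (fun x => s x * psiTwoL (m+1) x) B volume :=
    (hscont.mul hψcont).continuousOn.integrableOn_compact (isCompact_closedBall _ _)
  have hint_snψ : IntegrableOn (fun x => s (-x) * psiTwoL (m+1) x) B volume :=
    ((hscont.comp continuous_neg).mul hψcont).continuousOn.integrableOn_compact
      (isCompact_closedBall _ _)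
  set Jm := ∫ t in (0:ℝ)..1, t ^ 2 * w (m+1) t with hJm_def
  set σt := ((volume : Measure (EuclideanSpace ℝ (Fin (m+1)))).toSphere univ).toReal with hσ_def
  have hσnn : 0 ≤ σt := ENNReal.toReal_nonneg
  -- LHS computation
  have hLHS : (∫ x in B, psiTwoL (m+1) x * psiTwoL (m+1) x) - (∫ x in B, psiTwoL (m+1) x)
      = σt * (Bb (m+1) * Jm) := by
    have hsub : (∫ x in B, psiTwoL (m+1) x * psiTwoL (m+1) x) - (∫ x in B, psiTwoL (m+1) x)
        = ∫ x in B, (psiTwoL (m+1) x * psiTwoL (m+1) x - psiTwoL (m+1) x) :=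
      (integral_sub hint_ψψ hint_ψ).symm
    have hp := polar (show 1 ≤ m + 1 by omega)
      (fun x => psiTwoL (m+1) x * psiTwoL (m+1) x - psiTwoL (m+1) x)
      ((hψcont.mul hψcont).sub hψcont)
    have hconst : ∀ u : Metric.sphere (0 : EuclideanSpace ℝ (Fin (m+1))) 1,
        (∫ t in Ioc (0:ℝ) 1, t ^ ((m+1) - 1) *
          ((fun x => psiTwoL (m+1) x * psiTwoL (m+1) x - psiTwoL (m+1) x)
            (t • (u : EuclideanSpace ℝ (Fin (m+1))))))
          = Bb (m+1) * Jm := by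
      intro u
      have huu : ‖(u : EuclideanSpace ℝ (Fin (m+1)))‖ = 1 := mem_sphere_zero_iff_norm.mp u.2
      have hcong : ∀ t ∈ Ioc (0:ℝ) 1, t ^ ((m+1) - 1) *
          ((fun x => psiTwoL (m+1) x * psiTwoL (m+1) x - psiTwoL (m+1) x)
            (t • (u : EuclideanSpace ℝ (Fin (m+1)))))
          = t ^ m * (psiR (m+1) t * psiR (m+1) t - psiR (m+1) t) := by
        intro t ht
        have hn : ‖t • (u : EuclideanSpace ℝ (Fin (m+1)))‖ = t := by
          rw [norm_smul, huu, mul_one, Real.norm_eq_abs, abs_of_pos ht.1]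
        simp only [psiTwoL_radial, hn, Nat.add_sub_cancel]
      rw [setIntegral_congr_fun measurableSet_Ioc hcong,
        ← intervalIntegral.integral_of_le zero_le_one, radial_value m, hJm_def]
    rw [hsub, hB_def, hp.1]
    rw [integral_congr_ae (Filter.Eventually.of_forall hconst), MeasureTheory.integral_const, smul_eq_mul,
      measureReal_def, hσ_def]
  -- symmetry
  have hsymm : ∫ x in B, s (-x) * psiTwoL (m+1) x = ∫ x in B, s x * psiTwoL (m+1) x := by
    have hmem : ∀ x : EuclideanSpace ℝ (Fin (m+1)), -x ∈ B ↔ x ∈ B := by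
      intro x
      rw [hB_def]
      simp [mem_closedBall_zero_iff]
    have h2 : ∀ x : EuclideanSpace ℝ (Fin (m+1)),
        B.indicator (fun x => s (-x) * psiTwoL (m+1) x) x
          = B.indicator (fun x => s x * psiTwoL (m+1) x) (-x) := by
      intro x
      by_cases hx : x ∈ B
      · rw [indicator_of_mem hx, indicator_of_mem ((hmem x).mpr hx)]
        congr 1
        rw [psiTwoL_radial, psiTwoL_radial, norm_neg]
      · rw [indicator_of_notMem hx, indicator_of_notMem (fun h => hx ((hmem x).mp h))]
    calc ∫ x in B, s (-x) * psiTwoL (m+1) x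
        = ∫ x, B.indicator (fun x => s (-x) * psiTwoL (m+1) x) x :=
          (MeasureTheory.integral_indicator (hB_def ▸ measurableSet_closedBall)).symm
      _ = ∫ x, B.indicator (fun x => s x * psiTwoL (m+1) x) (-x) :=
          integral_congr_ae (Filter.Eventually.of_forall h2)
      _ = ∫ x, B.indicator (fun x => s x * psiTwoL (m+1) x) x := by
          exact integral_neg_eq_self _ _
      _ = ∫ x in B, s x * psiTwoL (m+1) x :=
          MeasureTheory.integral_indicator (hB_def ▸ measurableSet_closedBall)
  -- RHS lower bound via polar decomposition
  set F : EuclideanSpace ℝ (Fin (m+1)) → ℝ := fun x => (s x + s (-x)) * psiTwoL (m+1) x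
    with hF_def
  have hFcont : Continuous F := (hscont.add (hscont.comp continuous_neg)).mul hψcont
  have hp2 := polar (show 1 ≤ m + 1 by omega) F hFcont
  have hlow : ∀ u : Metric.sphere (0 : EuclideanSpace ℝ (Fin (m+1))) 1,
      2 * (Bb (m+1) * Jm) ≤
        ∫ t in Ioc (0:ℝ) 1, t ^ ((m+1) - 1) * F (t • (u : EuclideanSpace ℝ (Fin (m+1)))) := by
    intro u
    have huu : ‖(u : EuclideanSpace ℝ (Fin (m+1)))‖ = 1 := mem_sphere_zero_iff_norm.mp u.2
    set v : EuclideanSpace ℝ (Fin (m+1)) := α • (u : EuclideanSpace ℝ (Fin (m+1))) with hv_def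
    have hvnorm : ‖v‖ ^ 2 = 2 * Bb (m+1) := by
      rw [hv_def, norm_smul, huu, mul_one, Real.norm_eq_abs, abs_of_pos hαpos, hα2]
    have hcong : ∀ t ∈ Ioc (0:ℝ) 1,
        t ^ ((m+1) - 1) * F (t • (u : EuclideanSpace ℝ (Fin (m+1))))
          = (g (t • v) + g (t • (-v))) * w (m+1) t := by
      intro t ht
      have hn : ‖t • (u : EuclideanSpace ℝ (Fin (m+1)))‖ = t := by
        rw [norm_smul, huu, mul_one, Real.norm_eq_abs, abs_of_pos ht.1]
      have h1 : s (t • (u : EuclideanSpace ℝ (Fin (m+1)))) = g (t • v) := by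
        rw [hsg, hv_def, smul_smul, smul_smul, mul_comm]
      have h2 : s (-(t • (u : EuclideanSpace ℝ (Fin (m+1))))) = g (t • (-v)) := by
        rw [hsg, hv_def, smul_neg, smul_neg, smul_smul, smul_smul, mul_comm]
      rw [hF_def]
      simp only [psiTwoL_radial, hn, Nat.add_sub_cancel, h1, h2, w]
      ring
    rw [setIntegral_congr_fun measurableSet_Ioc hcong,
      ← intervalIntegral.integral_of_le zero_le_one]
    exact per_direction m g hdiff hlip hg0 v hvnorm
  have hFge : σt * (2 * (Bb (m+1) * Jm)) ≤ ∫ x in B, F x := by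
    rw [hB_def, hp2.1]
    have hmono := integral_mono (μ := (volume : Measure (EuclideanSpace ℝ (Fin (m+1)))).toSphere)
      (integrable_const (2 * (Bb (m+1) * Jm))) hp2.2 hlow
    rw [MeasureTheory.integral_const, smul_eq_mul] at hmono
    exact hσ_def ▸ hmono
  have hFsplit : ∫ x in B, F x = 2 * ∫ x in B, s x * psiTwoL (m+1) x := by
    have : ∫ x in B, F x = (∫ x in B, s x * psiTwoL (m+1) x)
        + ∫ x in B, s (-x) * psiTwoL (m+1) x := by
      rw [hF_def, ← integral_add hint_sψ hint_snψ]
      congr 1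
      funext x
      ring
    rw [this, hsymm]
    ring
  rw [hB_def] at hLHS hFge hFsplit
  rw [hLHS]
  linarith
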